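/- For even n ≥ 6 and any 2 ≤ i, j ≤ n-2 with i ≠ j, the lobster tree A_iB displays the character χ_j. -/

import Mathlib

namespace PP

/-- A vertex is a leaf (degree at most one) if it has at most one neighbour. -/
def IsLeafVert {V : Type} (G : SimpleGraph V) (w : V) : Prop :=
  ∀ w₁ w₂ : V, G.Adj w w₁ → G.Adj w w₂ → w₁ = w₂

/-- A (finite, unrooted) phylogenetic tree on a label set `X ⊆ L`:
its leaves are bijectively labelled by the elements of `X`. -/
structure PhyloTree {L : Type} (X : Set L) where
  V : Type
  finV : Finite V
  G : SimpleGraph V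
  isTree : G.IsTree
  leaf : L → V
  leaf_injOn : Set.InjOn leaf X
  leaf_isLeaf : ∀ x ∈ X, IsLeafVert G (leaf x)
  leaf_surj : ∀ w, IsLeafVert G w → ∃ x ∈ X, leaf x = w

/-- The vertex set of the minimal subtree `T[S]` spanning the leaves labelled by `S ∩ X`. -/
def subtree {L : Type} {X : Set L} (T : PhyloTree X) (S : Set L) : Set T.V :=
  {w | ∃ x ∈ S ∩ X, ∃ y ∈ S ∩ X,
        ∃ p : T.G.Walk (T.leaf x) (T.leaf y), p.IsPath ∧ w ∈ p.support}

/-- `T` displays the character `χ` (a state assignment, whose nonempty fibres on `X`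
are the states) if the minimal subtrees spanning distinct states are vertex-disjoint. -/
def displays {L : Type} {X : Set L} (T : PhyloTree X) (χ : L → ℕ) : Prop :=
  ∀ s t : ℕ, s ≠ t → Disjoint (subtree T {x | χ x = s}) (subtree T {x | χ x = t})

/-- A set of characters is compatible if some tree on `X` displays all of them. -/
def compatible {L : Type} (X : Set L) (C : Set (L → ℕ)) : Prop :=
  ∃ T : PhyloTree X, ∀ χ ∈ C, displays T χ

/-- Labels: `(false, i)` is `aᵢ`, `(true, i)` is `bᵢ`. -/
abbrev Lbl : Type := Bool × ℕ

def a (i : ℕ) : Lbl := (false, i)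
def b (i : ℕ) : Lbl := (true, i)

/-- `X = {a₁,…,aₙ,b₁,…,bₙ}`. -/
def Xset (n : ℕ) : Set Lbl := {p | 1 ≤ p.2 ∧ p.2 ≤ n}

/-- `X_{≤ i} = {aⱼ, bⱼ : 1 ≤ j ≤ i}`. -/
def XLE (i : ℕ) : Set Lbl := {p | 1 ≤ p.2 ∧ p.2 ≤ i}

/-- χ_j = X_{≤j-2} | a_{j-1} | b_{j-1} | a_j a_{j+1} | b_j b_{j+1} | a_{j+2} | b_{j+2} | X_{≥j+3} -/
def chi (j : ℕ) : Lbl → ℕ := fun p =>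
  if p.2 + 2 ≤ j then 0
  else if p.2 + 1 = j then cond p.1 2 1
  else if p.2 ≤ j + 1 then cond p.1 4 3
  else if p.2 = j + 2 then cond p.1 6 5
  else 7

def phiMain (j i : ℕ) : ℕ :=
  if i < j then 0 else if i = j then 3 else if i = j + 1 then 4 else 5

def phiSide (j i : ℕ) : ℕ :=
  if i + 3 ≤ j then 0 else if i + 2 = j then 1 else if i + 1 = j then 2 else 5

/-- For even j: φ_j = X_{≤j-3}∪{b_{j-2},b_{j-1}} | a_{j-2} | a_{j-1} | b_j | b_{j+1} | {a_j,a_{j+1}}∪X_{≥j+2};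
for odd j the roles of a and b are swapped. -/
def phi (j : ℕ) : Lbl → ℕ := fun p =>
  if j % 2 = 0 then cond p.1 (phiMain j p.2) (phiSide j p.2)
  else cond p.1 (phiSide j p.2) (phiMain j p.2)

/-- Ω_A = a₁b₁b₂ | {a₂} ∪ X_{≥3}. -/
def OmA : Lbl → ℕ := fun p =>
  cond p.1 (if p.2 ≤ 2 then 0 else 1) (if p.2 = 1 then 0 else 1)

/-- Ω_B = X_{≤n-2} ∪ {b_{n-1}} | a_{n-1} aₙ bₙ. -/
def OmB (n : ℕ) : Lbl → ℕ := fun p =>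
  cond p.1 (if p.2 = n then 1 else 0) (if p.2 + 1 ≥ n then 1 else 0)

/-- The edges of the lobster `A_iB`: central path a₁,u₁,…,u_{i-1},u_A,u_B,u_{i+1},…,u_{n-1},bₙ;
edges u_k v_k for k ≠ i; if i is even, u_A is adjacent to aᵢ and u_B to b_{i+1};
if i is odd, u_A is adjacent to bᵢ and u_B to a_{i+1}; for k < i, v_k is adjacent to
b_k,b_{k+1} (k odd) or a_k,a_{k+1} (k even); for k > i the a/b roles are swapped. -/
def AdjSpecMid (n i : ℕ) {X : Set Lbl} (T : PhyloTree X) (u v : ℕ → T.V)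
    (uA uB : T.V) (w w' : T.V) : Prop :=
  (w = T.leaf (a 1) ∧ w' = u 1) ∨
  (∃ k, 1 ≤ k ∧ k + 1 ≤ i - 1 ∧ w = u k ∧ w' = u (k + 1)) ∨
  (w = u (i - 1) ∧ w' = uA) ∨
  (w = uA ∧ w' = uB) ∨
  (w = uB ∧ w' = u (i + 1)) ∨
  (∃ k, i + 1 ≤ k ∧ k + 1 ≤ n - 1 ∧ w = u k ∧ w' = u (k + 1)) ∨
  (w = u (n - 1) ∧ w' = T.leaf (b n)) ∨
  (∃ k, 1 ≤ k ∧ k ≤ n - 1 ∧ k ≠ i ∧ w = u k ∧ w' = v k) ∨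
  (i % 2 = 0 ∧ w = uA ∧ w' = T.leaf (a i)) ∨
  (i % 2 = 0 ∧ w = uB ∧ w' = T.leaf (b (i + 1))) ∨
  (i % 2 = 1 ∧ w = uA ∧ w' = T.leaf (b i)) ∨
  (i % 2 = 1 ∧ w = uB ∧ w' = T.leaf (a (i + 1))) ∨
  (∃ k, 1 ≤ k ∧ k < i ∧ k % 2 = 1 ∧ w = v k ∧
      (w' = T.leaf (b k) ∨ w' = T.leaf (b (k + 1)))) ∨
  (∃ k, 1 ≤ k ∧ k < i ∧ k % 2 = 0 ∧ w = v k ∧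
      (w' = T.leaf (a k) ∨ w' = T.leaf (a (k + 1)))) ∨
  (∃ k, i < k ∧ k ≤ n - 1 ∧ k % 2 = 1 ∧ w = v k ∧
      (w' = T.leaf (a k) ∨ w' = T.leaf (a (k + 1)))) ∨
  (∃ k, i < k ∧ k ≤ n - 1 ∧ k % 2 = 0 ∧ w = v k ∧
      (w' = T.leaf (b k) ∨ w' = T.leaf (b (k + 1))))

/-- `T`, with internal vertices `u k`, `v k` (k ∈ [n-1] \ {i}) and `uA`, `uB`,
is the lobster `A_iB`. -/
def IsLobsterMid (n i : ℕ) (T : PhyloTree (Xset n)) (u v : ℕ → T.V) (uA uB : T.V) : Prop :=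
  (∀ k l, 1 ≤ k → k ≤ n - 1 → k ≠ i → 1 ≤ l → l ≤ n - 1 → l ≠ i →
      (u k = u l → k = l) ∧ (v k = v l → k = l) ∧ u k ≠ v l ∧
      u k ≠ uA ∧ u k ≠ uB ∧ v k ≠ uA ∧ v k ≠ uB) ∧
  uA ≠ uB ∧
  (∀ p ∈ Xset n, T.leaf p ≠ uA ∧ T.leaf p ≠ uB ∧
      ∀ k, 1 ≤ k → k ≤ n - 1 → k ≠ i → T.leaf p ≠ u k ∧ T.leaf p ≠ v k) ∧
  (∀ w : T.V, (∃ p ∈ Xset n, T.leaf p = w) ∨ w = uA ∨ w = uB ∨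
      (∃ k, 1 ≤ k ∧ k ≤ n - 1 ∧ k ≠ i ∧ (u k = w ∨ v k = w))) ∧
  (∀ w w' : T.V, T.G.Adj w w' ↔
      (AdjSpecMid n i T u v uA uB w w' ∨ AdjSpecMid n i T u v uA uB w' w))

/-! ### Auxiliary machinery -/

section ReachAux

variable {V : Type} {G : SimpleGraph V} {W : Set V} {x y z : V}

/-- Reachability within a vertex set `W`. -/
def Reach (G : SimpleGraph V) (W : Set V) (x y : V) : Prop :=
  ∃ w : G.Walk x y, ∀ z ∈ w.support, z ∈ W

lemma Reach.refl (hx : x ∈ W) : Reach G W x x :=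
  ⟨SimpleGraph.Walk.nil, by simpa using hx⟩

lemma Reach.symm (h : Reach G W x y) : Reach G W y x := by
  obtain ⟨w, hw⟩ := h
  refine ⟨w.reverse, ?_⟩
  intro z hz
  rw [SimpleGraph.Walk.support_reverse] at hz
  exact hw z (List.mem_reverse.mp hz)

lemma Reach.trans (h1 : Reach G W x y) (h2 : Reach G W y z) : Reach G W x z := by
  obtain ⟨w1, hw1⟩ := h1; obtain ⟨w2, hw2⟩ := h2
  refine ⟨w1.append w2, ?_⟩
  intro t ht
  rcases (SimpleGraph.Walk.mem_support_append_iff _ _).mp ht with h | h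
  · exact hw1 t h
  · exact hw2 t h

lemma Reach.step (hadj : G.Adj x y) (hx : x ∈ W) (hy : y ∈ W) : Reach G W x y :=
  ⟨SimpleGraph.Walk.cons hadj SimpleGraph.Walk.nil, by
    intro z hz; simp only [SimpleGraph.Walk.support_cons, SimpleGraph.Walk.support_nil,
      List.mem_cons, List.mem_singleton] at hz
    rcases hz with rfl | hz
    · exact hx
    · rcases hz with rfl | h
      · exact hy
      · exact absurd h List.not_mem_nil⟩

lemma Reach.mem_left (h : Reach G W x y) : x ∈ W := by
  obtain ⟨w, hw⟩ := h; exact hw x w.start_mem_support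

end ReachAux

/-- If every pair of vertices of `W` is connected within `W`, and the leaves of the states
`s`-class lie in `W`, then the spanning subtree of the class lies in `W`. -/
lemma subtree_subset_of_reach {L : Type} {X : Set L} (T : PhyloTree X) (S : Set L)
    (W : Set T.V) (hconn : ∀ x ∈ W, ∀ y ∈ W, Reach T.G W x y)
    (hleaf : ∀ p ∈ S ∩ X, T.leaf p ∈ W) :
    subtree T S ⊆ W := by
  classical
  rintro w ⟨x, hx, y, hy, p, hp, hw⟩
  obtain ⟨q, hq⟩ := hconn _ (hleaf x hx) _ (hleaf y hy)
  have huniq := T.isTree.existsUnique_path (T.leaf x) (T.leaf y)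
  obtain ⟨r, -, hr⟩ := huniq
  have h1 : p = r := hr p hp
  have h2 : q.bypass = r := hr q.bypass q.bypass_isPath
  have : w ∈ q.bypass.support := by rw [h2, ← h1]; exact hw
  exact hq w (q.support_bypass_subset this)

/-- Main disjointness criterion: a family of pairwise disjoint, internally connected vertex
sets containing the leaves of the corresponding states forces `displays`. -/
lemma displays_of_parts {L : Type} {X : Set L} (T : PhyloTree X) (χ : L → ℕ)
    (W : ℕ → Set T.V)
    (hdisj : ∀ s t, s ≠ t → Disjoint (W s) (W t))
    (hconn : ∀ s, ∀ x ∈ W s, ∀ y ∈ W s, Reach T.G (W s) x y)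
    (hleaf : ∀ p ∈ X, T.leaf p ∈ W (χ p)) :
    displays T χ := by
  intro s t hst
  have hsub : ∀ r : ℕ, subtree T {x | χ x = r} ⊆ W r := by
    intro r
    apply subtree_subset_of_reach T _ _ (hconn r)
    rintro p ⟨hp1, hp2⟩
    have := hleaf p hp2
    rwa [Set.mem_setOf_eq.mp hp1] at this
  exact Set.disjoint_of_subset (hsub s) (hsub t) (hdisj s t hst)


/-! ### The lobster context -/

structure Ctx where
  n : ℕ
  i : ℕ
  j : ℕ
  hn : Even n
  hn6 : 6 ≤ n
  hi2 : 2 ≤ i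
  hi' : i ≤ n - 2
  hj2 : 2 ≤ j
  hj' : j ≤ n - 2
  hij : i ≠ j
  T : PhyloTree (Xset n)
  u : ℕ → T.V
  v : ℕ → T.V
  uA : T.V
  uB : T.V
  hlob : IsLobsterMid n i T u v uA uB

namespace Ctx

variable (C : Ctx)

lemma u_inj {k l : ℕ} (hk1 : 1 ≤ k) (hk2 : k ≤ C.n - 1) (hk3 : k ≠ C.i)
    (hl1 : 1 ≤ l) (hl2 : l ≤ C.n - 1) (hl3 : l ≠ C.i) (h : C.u k = C.u l) : k = l :=
  (C.hlob.1 k l hk1 hk2 hk3 hl1 hl2 hl3).1 h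

lemma v_inj {k l : ℕ} (hk1 : 1 ≤ k) (hk2 : k ≤ C.n - 1) (hk3 : k ≠ C.i)
    (hl1 : 1 ≤ l) (hl2 : l ≤ C.n - 1) (hl3 : l ≠ C.i) (h : C.v k = C.v l) : k = l :=
  (C.hlob.1 k l hk1 hk2 hk3 hl1 hl2 hl3).2.1 h

lemma u_ne_v {k l : ℕ} (hk1 : 1 ≤ k) (hk2 : k ≤ C.n - 1) (hk3 : k ≠ C.i)
    (hl1 : 1 ≤ l) (hl2 : l ≤ C.n - 1) (hl3 : l ≠ C.i) : C.u k ≠ C.v l :=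
  (C.hlob.1 k l hk1 hk2 hk3 hl1 hl2 hl3).2.2.1

lemma u_ne_uA {k : ℕ} (hk1 : 1 ≤ k) (hk2 : k ≤ C.n - 1) (hk3 : k ≠ C.i) : C.u k ≠ C.uA :=
  (C.hlob.1 k k hk1 hk2 hk3 hk1 hk2 hk3).2.2.2.1

lemma u_ne_uB {k : ℕ} (hk1 : 1 ≤ k) (hk2 : k ≤ C.n - 1) (hk3 : k ≠ C.i) : C.u k ≠ C.uB :=
  (C.hlob.1 k k hk1 hk2 hk3 hk1 hk2 hk3).2.2.2.2.1

lemma v_ne_uA {k : ℕ} (hk1 : 1 ≤ k) (hk2 : k ≤ C.n - 1) (hk3 : k ≠ C.i) : C.v k ≠ C.uA :=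
  (C.hlob.1 k k hk1 hk2 hk3 hk1 hk2 hk3).2.2.2.2.2.1

lemma v_ne_uB {k : ℕ} (hk1 : 1 ≤ k) (hk2 : k ≤ C.n - 1) (hk3 : k ≠ C.i) : C.v k ≠ C.uB :=
  (C.hlob.1 k k hk1 hk2 hk3 hk1 hk2 hk3).2.2.2.2.2.2

lemma AB_ne : C.uA ≠ C.uB := C.hlob.2.1

lemma leaf_ne_uA {p : Lbl} (hp : p ∈ Xset C.n) : C.T.leaf p ≠ C.uA :=
  (C.hlob.2.2.1 p hp).1

lemma leaf_ne_uB {p : Lbl} (hp : p ∈ Xset C.n) : C.T.leaf p ≠ C.uB :=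
  (C.hlob.2.2.1 p hp).2.1

lemma leaf_ne_u {p : Lbl} (hp : p ∈ Xset C.n) {k : ℕ} (hk1 : 1 ≤ k) (hk2 : k ≤ C.n - 1)
    (hk3 : k ≠ C.i) : C.T.leaf p ≠ C.u k :=
  ((C.hlob.2.2.1 p hp).2.2 k hk1 hk2 hk3).1

lemma leaf_ne_v {p : Lbl} (hp : p ∈ Xset C.n) {k : ℕ} (hk1 : 1 ≤ k) (hk2 : k ≤ C.n - 1)
    (hk3 : k ≠ C.i) : C.T.leaf p ≠ C.v k :=
  ((C.hlob.2.2.1 p hp).2.2 k hk1 hk2 hk3).2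

lemma adj_of_spec {w w' : C.T.V} (hs : AdjSpecMid C.n C.i C.T C.u C.v C.uA C.uB w w') :
    C.T.G.Adj w w' :=
  (C.hlob.2.2.2.2 w w').mpr (Or.inl hs)

/- the sixteen adjacency clauses -/
lemma c1 : C.T.G.Adj (C.T.leaf (a 1)) (C.u 1) :=
  C.adj_of_spec (Or.inl ⟨rfl, rfl⟩)

lemma c2 (k : ℕ) (h1 : 1 ≤ k) (h2 : k + 1 ≤ C.i - 1) : C.T.G.Adj (C.u k) (C.u (k+1)) :=
  C.adj_of_spec (Or.inr <| Or.inl ⟨k, h1, h2, rfl, rfl⟩)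

lemma c3 : C.T.G.Adj (C.u (C.i - 1)) C.uA :=
  C.adj_of_spec (Or.inr <| Or.inr <| Or.inl ⟨rfl, rfl⟩)

lemma c4 : C.T.G.Adj C.uA C.uB :=
  C.adj_of_spec (Or.inr <| Or.inr <| Or.inr <| Or.inl ⟨rfl, rfl⟩)

lemma c5 : C.T.G.Adj C.uB (C.u (C.i + 1)) :=
  C.adj_of_spec (Or.inr <| Or.inr <| Or.inr <| Or.inr <| Or.inl ⟨rfl, rfl⟩)

lemma c6 (k : ℕ) (h1 : C.i + 1 ≤ k) (h2 : k + 1 ≤ C.n - 1) :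
    C.T.G.Adj (C.u k) (C.u (k+1)) :=
  C.adj_of_spec (Or.inr <| Or.inr <| Or.inr <| Or.inr <| Or.inr <| Or.inl ⟨k, h1, h2, rfl, rfl⟩)

lemma c7 : C.T.G.Adj (C.u (C.n - 1)) (C.T.leaf (b C.n)) :=
  C.adj_of_spec (Or.inr <| Or.inr <| Or.inr <| Or.inr <| Or.inr <| Or.inr <| Or.inl ⟨rfl, rfl⟩)

lemma c8 (k : ℕ) (h1 : 1 ≤ k) (h2 : k ≤ C.n - 1) (h3 : k ≠ C.i) :
    C.T.G.Adj (C.u k) (C.v k) :=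
  C.adj_of_spec (Or.inr <| Or.inr <| Or.inr <| Or.inr <| Or.inr <| Or.inr <| Or.inr <|
    Or.inl ⟨k, h1, h2, h3, rfl, rfl⟩)

lemma c9 (h : C.i % 2 = 0) : C.T.G.Adj C.uA (C.T.leaf (a C.i)) :=
  C.adj_of_spec (Or.inr <| Or.inr <| Or.inr <| Or.inr <| Or.inr <| Or.inr <| Or.inr <|
    Or.inr <| Or.inl ⟨h, rfl, rfl⟩)

lemma c10 (h : C.i % 2 = 0) : C.T.G.Adj C.uB (C.T.leaf (b (C.i + 1))) :=
  C.adj_of_spec (Or.inr <| Or.inr <| Or.inr <| Or.inr <| Or.inr <| Or.inr <| Or.inr <|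
    Or.inr <| Or.inr <| Or.inl ⟨h, rfl, rfl⟩)

lemma c11 (h : C.i % 2 = 1) : C.T.G.Adj C.uA (C.T.leaf (b C.i)) :=
  C.adj_of_spec (Or.inr <| Or.inr <| Or.inr <| Or.inr <| Or.inr <| Or.inr <| Or.inr <|
    Or.inr <| Or.inr <| Or.inr <| Or.inl ⟨h, rfl, rfl⟩)

lemma c12 (h : C.i % 2 = 1) : C.T.G.Adj C.uB (C.T.leaf (a (C.i + 1))) :=
  C.adj_of_spec (Or.inr <| Or.inr <| Or.inr <| Or.inr <| Or.inr <| Or.inr <| Or.inr <|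
    Or.inr <| Or.inr <| Or.inr <| Or.inr <| Or.inl ⟨h, rfl, rfl⟩)

lemma c13 (k : ℕ) (h1 : 1 ≤ k) (h2 : k < C.i) (h3 : k % 2 = 1)
    (x : Lbl) (hx : x = b k ∨ x = b (k+1)) : C.T.G.Adj (C.v k) (C.T.leaf x) :=
  C.adj_of_spec (Or.inr <| Or.inr <| Or.inr <| Or.inr <| Or.inr <| Or.inr <| Or.inr <|
    Or.inr <| Or.inr <| Or.inr <| Or.inr <| Or.inr <| Or.inl
    ⟨k, h1, h2, h3, rfl, by rcases hx with rfl | rfl; exacts [Or.inl rfl, Or.inr rfl]⟩)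

lemma c14 (k : ℕ) (h1 : 1 ≤ k) (h2 : k < C.i) (h3 : k % 2 = 0)
    (x : Lbl) (hx : x = a k ∨ x = a (k+1)) : C.T.G.Adj (C.v k) (C.T.leaf x) :=
  C.adj_of_spec (Or.inr <| Or.inr <| Or.inr <| Or.inr <| Or.inr <| Or.inr <| Or.inr <|
    Or.inr <| Or.inr <| Or.inr <| Or.inr <| Or.inr <| Or.inr <| Or.inl
    ⟨k, h1, h2, h3, rfl, by rcases hx with rfl | rfl; exacts [Or.inl rfl, Or.inr rfl]⟩)

lemma c15 (k : ℕ) (h1 : C.i < k) (h2 : k ≤ C.n - 1) (h3 : k % 2 = 1)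
    (x : Lbl) (hx : x = a k ∨ x = a (k+1)) : C.T.G.Adj (C.v k) (C.T.leaf x) :=
  C.adj_of_spec (Or.inr <| Or.inr <| Or.inr <| Or.inr <| Or.inr <| Or.inr <| Or.inr <|
    Or.inr <| Or.inr <| Or.inr <| Or.inr <| Or.inr <| Or.inr <| Or.inr <| Or.inl
    ⟨k, h1, h2, h3, rfl, by rcases hx with rfl | rfl; exacts [Or.inl rfl, Or.inr rfl]⟩)

lemma c16 (k : ℕ) (h1 : C.i < k) (h2 : k ≤ C.n - 1) (h3 : k % 2 = 0)
    (x : Lbl) (hx : x = b k ∨ x = b (k+1)) : C.T.G.Adj (C.v k) (C.T.leaf x) :=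
  C.adj_of_spec (Or.inr <| Or.inr <| Or.inr <| Or.inr <| Or.inr <| Or.inr <| Or.inr <|
    Or.inr <| Or.inr <| Or.inr <| Or.inr <| Or.inr <| Or.inr <| Or.inr <| Or.inr
    ⟨k, h1, h2, h3, rfl, by rcases hx with rfl | rfl; exacts [Or.inl rfl, Or.inr rfl]⟩)

/-- The spine of the lobster, positions `0,…,n+1`. -/
def spv (m : ℕ) : C.T.V :=
  if m = 0 then C.T.leaf (a 1)
  else if m < C.i then C.u m
  else if m = C.i then C.uA
  else if m = C.i + 1 then C.uB
  else if m ≤ C.n then C.u (m - 1)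
  else C.T.leaf (b C.n)

lemma spv_lt {k : ℕ} (h1 : 1 ≤ k) (h2 : k < C.i) : C.spv k = C.u k := by
  unfold spv; rw [if_neg (by omega), if_pos h2]

lemma spv_i : C.spv C.i = C.uA := by
  have := C.hi2
  unfold spv; rw [if_neg (by omega), if_neg (by omega), if_pos rfl]

lemma spv_i1 : C.spv (C.i + 1) = C.uB := by
  have := C.hi2
  unfold spv; rw [if_neg (by omega), if_neg (by omega), if_neg (by omega), if_pos rfl]

lemma spv_gt {k : ℕ} (h1 : C.i < k) (h2 : k ≤ C.n - 1) : C.spv (k + 1) = C.u k := by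
  have := C.hi2; have := C.hn6
  unfold spv
  rw [if_neg (by omega), if_neg (by omega), if_neg (by omega), if_neg (by omega),
    if_pos (by omega), Nat.add_sub_cancel]

lemma spv_cases {m : ℕ} (h1 : 1 ≤ m) (h2 : m ≤ C.n) :
    (C.spv m = C.u m ∧ m < C.i) ∨ (C.spv m = C.uA ∧ m = C.i) ∨
    (C.spv m = C.uB ∧ m = C.i + 1) ∨ (C.spv m = C.u (m - 1) ∧ C.i + 2 ≤ m) := by
  by_cases hc1 : m < C.i
  · exact Or.inl ⟨C.spv_lt h1 hc1, hc1⟩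
  by_cases hc2 : m = C.i
  · exact Or.inr <| Or.inl ⟨by rw [hc2, C.spv_i], hc2⟩
  by_cases hc3 : m = C.i + 1
  · exact Or.inr <| Or.inr <| Or.inl ⟨by rw [hc3, C.spv_i1], hc3⟩
  · refine Or.inr <| Or.inr <| Or.inr ⟨?_, by omega⟩
    have h4 : C.i < m - 1 := by omega
    have h5 : m - 1 ≤ C.n - 1 := by omega
    have := C.spv_gt h4 h5
    rw [show m - 1 + 1 = m by omega] at this
    exact this

lemma spv_inj {m m' : ℕ} (h1 : 1 ≤ m) (h2 : m ≤ C.n) (h1' : 1 ≤ m') (h2' : m' ≤ C.n)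
    (h : C.spv m = C.spv m') : m = m' := by
  have hi2 := C.hi2; have hi' := C.hi'; have hn6 := C.hn6
  rcases C.spv_cases h1 h2 with ⟨e, hm⟩ | ⟨e, hm⟩ | ⟨e, hm⟩ | ⟨e, hm⟩ <;>
    rcases C.spv_cases h1' h2' with ⟨e', hm'⟩ | ⟨e', hm'⟩ | ⟨e', hm'⟩ | ⟨e', hm'⟩ <;>
    rw [e, e'] at h
  · have := C.u_inj (k := m) (l := m') (by omega) (by omega) (by omega)
      (by omega) (by omega) (by omega) h; omega
  · exact absurd h (C.u_ne_uA (by omega) (by omega) (by omega))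
  · exact absurd h (C.u_ne_uB (by omega) (by omega) (by omega))
  · have := C.u_inj (k := m) (l := m' - 1) (by omega) (by omega) (by omega)
      (by omega) (by omega) (by omega) h; omega
  · exact absurd h.symm (C.u_ne_uA (by omega) (by omega) (by omega))
  · omega
  · exact absurd h C.AB_ne
  · exact absurd h.symm (C.u_ne_uA (by omega) (by omega) (by omega))
  · exact absurd h.symm (C.u_ne_uB (by omega) (by omega) (by omega))
  · exact absurd h.symm C.AB_ne
  · omega
  · exact absurd h.symm (C.u_ne_uB (by omega) (by omega) (by omega))
  · have := C.u_inj (k := m - 1) (l := m') (by omega) (by omega) (by omega)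
      (by omega) (by omega) (by omega) h; omega
  · exact absurd h (C.u_ne_uA (by omega) (by omega) (by omega))
  · exact absurd h (C.u_ne_uB (by omega) (by omega) (by omega))
  · have := C.u_inj (k := m - 1) (l := m' - 1) (by omega) (by omega) (by omega)
      (by omega) (by omega) (by omega) h; omega

lemma spv_ne_v {m k : ℕ} (h1 : 1 ≤ m) (h2 : m ≤ C.n) (hk1 : 1 ≤ k) (hk2 : k ≤ C.n - 1)
    (hk3 : k ≠ C.i) : C.spv m ≠ C.v k := by
  have hi2 := C.hi2; have hi' := C.hi'; have hn6 := C.hn6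
  rcases C.spv_cases h1 h2 with ⟨e, hm⟩ | ⟨e, hm⟩ | ⟨e, hm⟩ | ⟨e, hm⟩ <;> rw [e]
  · exact C.u_ne_v (by omega) (by omega) (by omega) hk1 hk2 hk3
  · exact fun h => (C.v_ne_uA hk1 hk2 hk3) h.symm
  · exact fun h => (C.v_ne_uB hk1 hk2 hk3) h.symm
  · exact C.u_ne_v (by omega) (by omega) (by omega) hk1 hk2 hk3

lemma leaf_ne_spv {p : Lbl} (hp : p ∈ Xset C.n) {m : ℕ} (h1 : 1 ≤ m) (h2 : m ≤ C.n) :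
    C.T.leaf p ≠ C.spv m := by
  have hi2 := C.hi2; have hi' := C.hi'; have hn6 := C.hn6
  rcases C.spv_cases h1 h2 with ⟨e, hm⟩ | ⟨e, hm⟩ | ⟨e, hm⟩ | ⟨e, hm⟩ <;> rw [e]
  · exact C.leaf_ne_u hp (by omega) (by omega) (by omega)
  · exact C.leaf_ne_uA hp
  · exact C.leaf_ne_uB hp
  · exact C.leaf_ne_u hp (by omega) (by omega) (by omega)

lemma adj_spv {m : ℕ} (hm : m ≤ C.n) : C.T.G.Adj (C.spv m) (C.spv (m + 1)) := by
  have hi2 := C.hi2; have hi' := C.hi'; have hn6 := C.hn6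
  by_cases h0 : m = 0
  · subst h0
    have e : C.spv 0 = C.T.leaf (a 1) := by unfold spv; rw [if_pos rfl]
    rw [e, C.spv_lt (by omega) (by omega)]
    exact C.c1
  by_cases hc1 : m + 1 ≤ C.i - 1
  · rw [C.spv_lt (by omega) (by omega), C.spv_lt (by omega) (by omega)]
    exact C.c2 m (by omega) hc1
  by_cases hc2 : m = C.i - 1
  · rw [C.spv_lt (by omega) (by omega), show m + 1 = C.i by omega, C.spv_i]
    rw [hc2]; exact C.c3
  by_cases hc3 : m = C.i
  · rw [hc3, C.spv_i, C.spv_i1]; exact C.c4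
  by_cases hc4 : m = C.i + 1
  · rw [hc4, C.spv_i1, show C.i + 1 + 1 = C.i + 1 + 1 from rfl]
    rw [C.spv_gt (k := C.i + 1) (by omega) (by omega)]
    exact C.c5
  by_cases hc5 : m ≤ C.n - 1
  · rw [show m = (m - 1) + 1 by omega, C.spv_gt (k := m - 1) (by omega) (by omega),
      show m - 1 + 1 + 1 = m + 1 by omega, C.spv_gt (k := m) (by omega) (by omega)]
    have := C.c6 (m - 1) (by omega) (by omega)
    rwa [show m - 1 + 1 = m by omega] at this
  · have hmn : m = C.n := by omega
    subst hmn
    have e : C.spv (C.n + 1) = C.T.leaf (b C.n) := by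
      unfold spv
      rw [if_neg (by omega), if_neg (by omega), if_neg (by omega), if_neg (by omega),
        if_neg (by omega)]
    have e2 : C.spv C.n = C.u (C.n - 1) := by
      have := C.spv_gt (k := C.n - 1) (by omega) (by omega)
      rwa [show C.n - 1 + 1 = C.n by omega] at this
    rw [e, e2]
    exact C.c7

lemma adj_vu_lt {k : ℕ} (h1 : 1 ≤ k) (h2 : k < C.i) : C.T.G.Adj (C.v k) (C.spv k) := by
  have hi' := C.hi'; have hn6 := C.hn6
  rw [C.spv_lt h1 h2]
  exact (C.c8 k h1 (by omega) (by omega)).symm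

lemma adj_vu_gt {k : ℕ} (h1 : C.i < k) (h2 : k ≤ C.n - 1) :
    C.T.G.Adj (C.v k) (C.spv (k + 1)) := by
  rw [C.spv_gt h1 h2]
  exact (C.c8 k (by omega) h2 (by omega)).symm

end Ctx


/-! ### Characterisation of the character `chi` -/

section ChiChar

variable {j : ℕ} {c : Bool} {m : ℕ}

lemma chi_char0 (h : chi j (c, m) = 0) : m + 2 ≤ j := by
  cases c <;> simp only [chi, Bool.cond_false, Bool.cond_true] at h <;>
    split_ifs at h <;> omega

lemma chi_char1 (h : chi j (c, m) = 1) : c = false ∧ m + 1 = j := by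
  cases c <;> simp only [chi, Bool.cond_false, Bool.cond_true] at h <;>
    split_ifs at h <;> first | exact ⟨rfl, by omega⟩ | exact absurd h (by omega)

lemma chi_char2 (h : chi j (c, m) = 2) : c = true ∧ m + 1 = j := by
  cases c <;> simp only [chi, Bool.cond_false, Bool.cond_true] at h <;>
    split_ifs at h <;> first | exact ⟨rfl, by omega⟩ | exact absurd h (by omega)

lemma chi_char3 (h : chi j (c, m) = 3) : c = false ∧ (m = j ∨ m = j + 1) := by
  cases c <;> simp only [chi, Bool.cond_false, Bool.cond_true] at h <;>
    split_ifs at h <;> first | exact ⟨rfl, by omega⟩ | exact absurd h (by omega)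

lemma chi_char4 (h : chi j (c, m) = 4) : c = true ∧ (m = j ∨ m = j + 1) := by
  cases c <;> simp only [chi, Bool.cond_false, Bool.cond_true] at h <;>
    split_ifs at h <;> first | exact ⟨rfl, by omega⟩ | exact absurd h (by omega)

lemma chi_char5 (h : chi j (c, m) = 5) : c = false ∧ m = j + 2 := by
  cases c <;> simp only [chi, Bool.cond_false, Bool.cond_true] at h <;>
    split_ifs at h <;> first | exact ⟨rfl, by omega⟩ | exact absurd h (by omega)

lemma chi_char6 (h : chi j (c, m) = 6) : c = true ∧ m = j + 2 := by
  cases c <;> simp only [chi, Bool.cond_false, Bool.cond_true] at h <;>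
    split_ifs at h <;> first | exact ⟨rfl, by omega⟩ | exact absurd h (by omega)

lemma chi_char7 (h : chi j (c, m) = 7) : j + 3 ≤ m := by
  cases c <;> simp only [chi, Bool.cond_false, Bool.cond_true] at h <;>
    split_ifs at h <;> omega

lemma chi_lt8 (j : ℕ) (p : Lbl) : chi j p < 8 := by
  obtain ⟨c, m⟩ := p
  cases c <;> simp only [chi, Bool.cond_false, Bool.cond_true] <;>
    split_ifs <;> omega

end ChiChar

namespace Ctx

variable (C : Ctx)

/-! ### The regions -/

def pEnd0 : ℕ := if C.i + 3 ≤ C.j then C.j - 1 else C.j - 2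

def pStart7 : ℕ := if C.j + 3 ≤ C.i then C.j + 2 else C.j + 3

def Lsp : ℕ := if C.i < C.j then C.j else C.j - 1

def ach : Prop := (C.j < C.i ∧ C.j % 2 = 0) ∨ (C.i < C.j ∧ C.j % 2 = 1)

instance : Decidable C.ach := by unfold ach; infer_instance

lemma pbounds : C.j - 2 ≤ C.pEnd0 ∧ C.pEnd0 ≤ C.j - 1 ∧ C.j + 2 ≤ C.pStart7 ∧
    C.pStart7 ≤ C.j + 3 ∧ C.j - 1 ≤ C.Lsp ∧ C.Lsp ≤ C.j ∧ C.pEnd0 < C.Lsp ∧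
    C.Lsp + 2 < C.pStart7 := by
  have := C.hij; have := C.hj2
  unfold pEnd0 pStart7 Lsp; split_ifs <;> omega

def Int0 (w : C.T.V) : Prop :=
  (∃ m, 1 ≤ m ∧ m ≤ C.pEnd0 ∧ w = C.spv m) ∨
  (∃ k, 1 ≤ k ∧ k ≤ C.j - 2 ∧ k ≠ C.i ∧ w = C.v k)

def Int7 (w : C.T.V) : Prop :=
  (∃ m, C.pStart7 ≤ m ∧ m ≤ C.n ∧ w = C.spv m) ∨
  (∃ k, C.j + 2 ≤ k ∧ k ≤ C.n - 1 ∧ k ≠ C.i ∧ w = C.v k)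

def IntCh (w : C.T.V) : Prop := w = C.v C.j

def IntSp (w : C.T.V) : Prop :=
  (∃ m, C.Lsp ≤ m ∧ m ≤ C.Lsp + 2 ∧ w = C.spv m) ∨
  (C.i ≠ C.j - 1 ∧ w = C.v (C.j - 1)) ∨
  (C.i ≠ C.j + 1 ∧ w = C.v (C.j + 1))

def IntPart (s : ℕ) (w : C.T.V) : Prop :=
  if s = 0 then C.Int0 w
  else if s = 3 then (if C.ach then C.IntCh w else C.IntSp w)
  else if s = 4 then (if C.ach then C.IntSp w else C.IntCh w)
  else if s = 7 then C.Int7 w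
  else False

def W (s : ℕ) : Set C.T.V :=
  {x | (∃ p, p ∈ Xset C.n ∧ chi C.j p = s ∧ x = C.T.leaf p) ∨ C.IntPart s x}

def SPcond (s m : ℕ) : Prop :=
  (s = 0 ∧ 1 ≤ m ∧ m ≤ C.pEnd0) ∨
  ((s = 3 ∧ ¬ C.ach ∨ s = 4 ∧ C.ach) ∧ C.Lsp ≤ m ∧ m ≤ C.Lsp + 2) ∨
  (s = 7 ∧ C.pStart7 ≤ m ∧ m ≤ C.n)

def VPcond (s k : ℕ) : Prop :=
  (s = 0 ∧ k ≤ C.j - 2) ∨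
  ((s = 3 ∧ C.ach ∨ s = 4 ∧ ¬ C.ach) ∧ k = C.j) ∨
  ((s = 3 ∧ ¬ C.ach ∨ s = 4 ∧ C.ach) ∧ (k = C.j - 1 ∨ k = C.j + 1)) ∨
  (s = 7 ∧ C.j + 2 ≤ k)

lemma int_desc {s : ℕ} {x : C.T.V} (h : C.IntPart s x) :
    (∃ m, 1 ≤ m ∧ m ≤ C.n ∧ C.SPcond s m ∧ x = C.spv m) ∨
    (∃ k, 1 ≤ k ∧ k ≤ C.n - 1 ∧ k ≠ C.i ∧ C.VPcond s k ∧ x = C.v k) := by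
  have hj2 := C.hj2; have hj' := C.hj'; have hn6 := C.hn6
  have hi2 := C.hi2; have hi' := C.hi'; have hij := C.hij
  obtain ⟨b1, b2, b3, b4, b5, b6, b7, b8⟩ := C.pbounds
  unfold IntPart at h
  split_ifs at h with h0 h3 hach h4 hach2 h7
  · rcases h with ⟨m, hm1, hm2, rfl⟩ | ⟨k, hk1, hk2, hk3, rfl⟩
    · exact Or.inl ⟨m, hm1, by omega, Or.inl ⟨h0, hm1, hm2⟩, rfl⟩
    · exact Or.inr ⟨k, hk1, by omega, hk3, Or.inl ⟨h0, hk2⟩, rfl⟩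
  · -- s = 3, ach : cherry
    exact Or.inr ⟨C.j, by omega, by omega, fun he => hij he.symm,
      Or.inr (Or.inl ⟨Or.inl ⟨h3, hach⟩, rfl⟩), h⟩
  · -- s = 3, ¬ach : spine
    rcases h with ⟨m, hm1, hm2, rfl⟩ | ⟨hne, rfl⟩ | ⟨hne, rfl⟩
    · exact Or.inl ⟨m, by omega, by omega,
        Or.inr (Or.inl ⟨Or.inl ⟨h3, hach⟩, hm1, hm2⟩), rfl⟩
    · exact Or.inr ⟨C.j - 1, by omega, by omega, fun he => hne he.symm,
        Or.inr (Or.inr (Or.inl ⟨Or.inl ⟨h3, hach⟩, Or.inl rfl⟩)), rfl⟩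
    · exact Or.inr ⟨C.j + 1, by omega, by omega, fun he => hne he.symm,
        Or.inr (Or.inr (Or.inl ⟨Or.inl ⟨h3, hach⟩, Or.inr rfl⟩)), rfl⟩
  · -- s = 4, ach : spine
    rcases h with ⟨m, hm1, hm2, rfl⟩ | ⟨hne, rfl⟩ | ⟨hne, rfl⟩
    · exact Or.inl ⟨m, by omega, by omega,
        Or.inr (Or.inl ⟨Or.inr ⟨h4, hach2⟩, hm1, hm2⟩), rfl⟩
    · exact Or.inr ⟨C.j - 1, by omega, by omega, fun he => hne he.symm,
        Or.inr (Or.inr (Or.inl ⟨Or.inr ⟨h4, hach2⟩, Or.inl rfl⟩)), rfl⟩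
    · exact Or.inr ⟨C.j + 1, by omega, by omega, fun he => hne he.symm,
        Or.inr (Or.inr (Or.inl ⟨Or.inr ⟨h4, hach2⟩, Or.inr rfl⟩)), rfl⟩
  · -- s = 4, ¬ach : cherry
    exact Or.inr ⟨C.j, by omega, by omega, fun he => hij he.symm,
      Or.inr (Or.inl ⟨Or.inr ⟨h4, hach2⟩, rfl⟩), h⟩
  · -- s = 7
    rcases h with ⟨m, hm1, hm2, rfl⟩ | ⟨k, hk1, hk2, hk3, rfl⟩
    · exact Or.inl ⟨m, by omega, hm2, Or.inr (Or.inr ⟨h7, hm1, hm2⟩), rfl⟩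
    · exact Or.inr ⟨k, by omega, hk2, hk3, Or.inr (Or.inr (Or.inr ⟨h7, hk1⟩)), rfl⟩

lemma SP_disj {s t m : ℕ} (hst : s ≠ t) (h1 : C.SPcond s m) (h2 : C.SPcond t m) : False := by
  obtain ⟨b1, b2, b3, b4, b5, b6, b7, b8⟩ := C.pbounds
  rcases h1 with ⟨e, h1a, h1b⟩ | ⟨e, h1a, h1b⟩ | ⟨e, h1a, h1b⟩ <;>
    rcases h2 with ⟨f, h2a, h2b⟩ | ⟨f, h2a, h2b⟩ | ⟨f, h2a, h2b⟩ <;>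
    first
      | omega
      | (rcases e with ⟨e1, e2⟩ | ⟨e1, e2⟩ <;> rcases f with ⟨f1, f2⟩ | ⟨f1, f2⟩ <;>
          first | omega | exact e2 f2 | exact f2 e2)

lemma VP_disj {s t k : ℕ} (hst : s ≠ t) (h1 : C.VPcond s k) (h2 : C.VPcond t k) : False := by
  have hj2 := C.hj2
  rcases h1 with ⟨e, h1a⟩ | ⟨e, h1a⟩ | ⟨e, h1a⟩ | ⟨e, h1a⟩ <;>
    rcases h2 with ⟨f, h2a⟩ | ⟨f, h2a⟩ | ⟨f, h2a⟩ | ⟨f, h2a⟩ <;>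
    first
      | omega
      | (rcases e with ⟨e1, e2⟩ | ⟨e1, e2⟩ <;> rcases f with ⟨f1, f2⟩ | ⟨f1, f2⟩ <;>
          first | omega | exact e2 f2 | exact f2 e2)

lemma int_disj {s t : ℕ} {x : C.T.V} (hst : s ≠ t) (h1 : C.IntPart s x)
    (h2 : C.IntPart t x) : False := by
  rcases C.int_desc h1 with ⟨m, hm1, hm2, hsp, he⟩ | ⟨k, hk1, hk2, hk3, hvp, he⟩ <;>
    rcases C.int_desc h2 with ⟨m', hm1', hm2', hsp', he'⟩ | ⟨k', hk1', hk2', hk3', hvp', he'⟩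
  · have hmm : m = m' := C.spv_inj hm1 hm2 hm1' hm2' (he.symm.trans he')
    subst hmm
    exact C.SP_disj hst hsp hsp'
  · exact C.spv_ne_v hm1 hm2 hk1' hk2' hk3' (he.symm.trans he')
  · exact C.spv_ne_v hm1' hm2' hk1 hk2 hk3 (he'.symm.trans he)
  · have hkk : k = k' := C.v_inj hk1 hk2 hk3 hk1' hk2' hk3' (he.symm.trans he')
    subst hkk
    exact C.VP_disj hst hvp hvp'

lemma W_disj : ∀ s t, s ≠ t → Disjoint (C.W s) (C.W t) := by
  intro s t hst
  rw [Set.disjoint_left]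
  rintro x hx hx'
  rcases hx with ⟨p, hp, hcp, rfl⟩ | hint
  · rcases hx' with ⟨q, hq, hcq, he⟩ | hint'
    · have hpq : p = q := C.T.leaf_injOn hp hq he
      subst hpq
      exact hst (hcp ▸ hcq ▸ rfl)
    · rcases C.int_desc hint' with ⟨m, h1, h2, _, he⟩ | ⟨k, h1, h2, h3, _, he⟩
      · exact C.leaf_ne_spv hp h1 h2 he
      · exact C.leaf_ne_v hp h1 h2 h3 he
  · rcases hx' with ⟨q, hq, hcq, he⟩ | hint'
    · rcases C.int_desc hint with ⟨m, h1, h2, _, he2⟩ | ⟨k, h1, h2, h3, _, he2⟩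
      · exact C.leaf_ne_spv hq h1 h2 (he.symm.trans he2)
      · exact C.leaf_ne_v hq h1 h2 h3 (he.symm.trans he2)
    · exact C.int_disj hst hint hint'

end Ctx


namespace Ctx

variable (C : Ctx)

/-! ### Walking along the spine -/

lemma reach_spv (Wset : Set C.T.V) : ∀ hi lo : ℕ, lo ≤ hi → hi ≤ C.n + 1 →
    (∀ m, lo ≤ m → m ≤ hi → C.spv m ∈ Wset) →
    Reach C.T.G Wset (C.spv lo) (C.spv hi) := by
  intro hi
  induction hi with
  | zero =>
      intro lo h1 _ h3
      have h0 : lo = 0 := by omega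
      subst h0
      exact Reach.refl (h3 0 le_rfl le_rfl)
  | succ hi ih =>
      intro lo h1 h2 h3
      by_cases hc : lo = hi + 1
      · subst hc; exact Reach.refl (h3 _ le_rfl le_rfl)
      · exact (ih lo (by omega) (by omega) (fun m hm1 hm2 => h3 m hm1 (by omega))).trans
          (Reach.step (C.adj_spv (by omega)) (h3 hi (by omega) (by omega))
            (h3 (hi+1) (by omega) le_rfl))

lemma reach_Int0 (Wset : Set C.T.V) (hsub : ∀ w, C.Int0 w → w ∈ Wset) :
    ∀ x, C.Int0 x → Reach C.T.G Wset x (C.spv 1) := by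
  have hj2 := C.hj2; have hj' := C.hj'; have hn6 := C.hn6
  have hi2 := C.hi2; have hi' := C.hi'
  obtain ⟨b1, b2, b3, b4, b5, b6, b7, b8⟩ := C.pbounds
  have hpe : C.i + 3 ≤ C.j → C.pEnd0 = C.j - 1 := by unfold pEnd0; split_ifs <;> omega
  have hmem : ∀ m, 1 ≤ m → m ≤ C.pEnd0 → C.spv m ∈ Wset :=
    fun m hm1 hm2 => hsub _ (Or.inl ⟨m, hm1, hm2, rfl⟩)
  intro x hx
  rcases hx with ⟨m, hm1, hm2, rfl⟩ | ⟨k, hk1, hk2, hk3, rfl⟩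
  · exact (C.reach_spv Wset m 1 hm1 (by omega) (fun m' h1 h2 => hmem m' h1 (by omega))).symm
  · rcases Nat.lt_or_ge k C.i with hki | hki
    · refine (Reach.step (C.adj_vu_lt hk1 hki) (hsub _ (Or.inr ⟨k, hk1, hk2, hk3, rfl⟩))
        (hmem k hk1 (by omega))).trans ?_
      exact (C.reach_spv Wset k 1 hk1 (by omega) (fun m' h1 h2 => hmem m' h1 (by omega))).symm
    · have hki' : C.i < k := by omega
      have hk4 : k + 1 ≤ C.pEnd0 := by have := hpe (by omega); omega
      refine (Reach.step (C.adj_vu_gt hki' (by omega)) (hsub _ (Or.inr ⟨k, hk1, hk2, hk3, rfl⟩))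
        (hmem (k+1) (by omega) hk4)).trans ?_
      exact (C.reach_spv Wset (k+1) 1 (by omega) (by omega)
        (fun m' h1 h2 => hmem m' h1 (by omega))).symm

lemma reach_Int7 (Wset : Set C.T.V) (hsub : ∀ w, C.Int7 w → w ∈ Wset) :
    ∀ x, C.Int7 x → Reach C.T.G Wset x (C.spv C.n) := by
  have hj2 := C.hj2; have hj' := C.hj'; have hn6 := C.hn6
  have hi2 := C.hi2; have hi' := C.hi'
  obtain ⟨b1, b2, b3, b4, b5, b6, b7, b8⟩ := C.pbounds
  have hps : C.j + 3 ≤ C.i → C.pStart7 = C.j + 2 := by unfold pStart7; split_ifs <;> omega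
  have hmem : ∀ m, C.pStart7 ≤ m → m ≤ C.n → C.spv m ∈ Wset :=
    fun m hm1 hm2 => hsub _ (Or.inl ⟨m, hm1, hm2, rfl⟩)
  intro x hx
  rcases hx with ⟨m, hm1, hm2, rfl⟩ | ⟨k, hk1, hk2, hk3, rfl⟩
  · exact C.reach_spv Wset C.n m hm2 (by omega) (fun m' h1 h2 => hmem m' (by omega) h2)
  · rcases Nat.lt_or_ge k C.i with hki | hki
    · have hk4 : C.pStart7 ≤ k := by have := hps (by omega); omega
      refine (Reach.step (C.adj_vu_lt (by omega) hki) (hsub _ (Or.inr ⟨k, hk1, hk2, hk3, rfl⟩))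
        (hmem k hk4 (by omega))).trans ?_
      exact C.reach_spv Wset C.n k (by omega) (by omega) (fun m' h1 h2 => hmem m' (by omega) h2)
    · have hki' : C.i < k := by omega
      refine (Reach.step (C.adj_vu_gt hki' hk2) (hsub _ (Or.inr ⟨k, hk1, hk2, hk3, rfl⟩))
        (hmem (k+1) (by omega) (by omega))).trans ?_
      exact C.reach_spv Wset C.n (k+1) (by omega) (by omega)
        (fun m' h1 h2 => hmem m' (by omega) h2)

lemma reach_IntSp (Wset : Set C.T.V) (hsub : ∀ w, C.IntSp w → w ∈ Wset) :
    ∀ x, C.IntSp x → Reach C.T.G Wset x (C.spv C.Lsp) := by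
  have hj2 := C.hj2; have hj' := C.hj'; have hn6 := C.hn6
  have hi2 := C.hi2; have hi' := C.hi'; have hij := C.hij
  obtain ⟨b1, b2, b3, b4, b5, b6, b7, b8⟩ := C.pbounds
  have hL1 : C.i < C.j → C.Lsp = C.j := by unfold Lsp; split_ifs <;> omega
  have hL2 : C.j < C.i → C.Lsp = C.j - 1 := by unfold Lsp; split_ifs <;> omega
  have hmem : ∀ m, C.Lsp ≤ m → m ≤ C.Lsp + 2 → C.spv m ∈ Wset :=
    fun m hm1 hm2 => hsub _ (Or.inl ⟨m, hm1, hm2, rfl⟩)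
  intro x hx
  rcases hx with ⟨m, hm1, hm2, rfl⟩ | ⟨hne, rfl⟩ | ⟨hne, rfl⟩
  · exact (C.reach_spv Wset m C.Lsp hm1 (by omega) (fun m' h1 h2 => hmem m' h1 (by omega))).symm
  · by_cases hki : C.j - 1 < C.i
    · have hLv : C.Lsp = C.j - 1 := hL2 (by omega)
      refine (Reach.step (C.adj_vu_lt (by omega) hki)
        (hsub _ (Or.inr (Or.inl ⟨hne, rfl⟩))) (hmem (C.j-1) (by omega) (by omega))).trans ?_
      exact (C.reach_spv Wset (C.j-1) C.Lsp (by omega) (by omega)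
        (fun m' h1 h2 => hmem m' h1 (by omega))).symm
    · have hki' : C.i < C.j - 1 := by omega
      have hLv : C.Lsp = C.j := hL1 (by omega)
      have hadj := C.adj_vu_gt hki' (by omega)
      rw [show C.j - 1 + 1 = C.j by omega] at hadj
      refine (Reach.step hadj (hsub _ (Or.inr (Or.inl ⟨hne, rfl⟩)))
        (hmem C.j (by omega) (by omega))).trans ?_
      exact (C.reach_spv Wset C.j C.Lsp (by omega) (by omega)
        (fun m' h1 h2 => hmem m' h1 (by omega))).symm
  · by_cases hki : C.j + 1 < C.i
    · have hLv : C.Lsp = C.j - 1 := hL2 (by omega)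
      refine (Reach.step (C.adj_vu_lt (by omega) hki)
        (hsub _ (Or.inr (Or.inr ⟨hne, rfl⟩))) (hmem (C.j+1) (by omega) (by omega))).trans ?_
      exact (C.reach_spv Wset (C.j+1) C.Lsp (by omega) (by omega)
        (fun m' h1 h2 => hmem m' h1 (by omega))).symm
    · have hki' : C.i < C.j + 1 := by omega
      have hilt : C.i < C.j := by omega
      have hLv : C.Lsp = C.j := hL1 hilt
      refine (Reach.step (C.adj_vu_gt hki' (by omega))
        (hsub _ (Or.inr (Or.inr ⟨hne, rfl⟩))) (hmem (C.j+2) (by omega) (by omega))).trans ?_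
      exact (C.reach_spv Wset (C.j+2) C.Lsp (by omega) (by omega)
        (fun m' h1 h2 => hmem m' h1 (by omega))).symm

end Ctx


namespace Ctx

variable (C : Ctx)

/-! ### Leaf attachments -/

lemma attach0 {cb : Bool} {m : ℕ} (hp : (cb, m) ∈ Xset C.n) (h0 : chi C.j (cb, m) = 0) :
    ∃ w, C.T.G.Adj (C.T.leaf (cb, m)) w ∧ C.Int0 w := by
  have hm1 : 1 ≤ m := hp.1
  have hmn : m ≤ C.n := hp.2
  have hmj : m + 2 ≤ C.j := chi_char0 h0
  have hj2 := C.hj2; have hj' := C.hj'; have hn6 := C.hn6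
  have hi2 := C.hi2; have hi' := C.hi'; have hij := C.hij
  obtain ⟨b1, b2, b3, b4, b5, b6, b7, b8⟩ := C.pbounds
  have hpe : C.i + 3 ≤ C.j → C.pEnd0 = C.j - 1 := by unfold pEnd0; split_ifs <;> omega
  cases cb with
  | false =>
    by_cases h1 : m = 1
    · subst h1
      refine ⟨C.spv 1, ?_, Or.inl ⟨1, le_rfl, by omega, rfl⟩⟩
      rw [C.spv_lt le_rfl (by omega)]
      exact C.c1
    by_cases h2 : m < C.i
    · by_cases he : m % 2 = 0
      · exact ⟨C.v m, (C.c14 m (by omega) h2 he _ (Or.inl rfl)).symm,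
          Or.inr ⟨m, by omega, by omega, by omega, rfl⟩⟩
      · refine ⟨C.v (m-1), (C.c14 (m-1) (by omega) (by omega) (by omega) _ ?_).symm,
          Or.inr ⟨m-1, by omega, by omega, by omega, rfl⟩⟩
        right; rw [show m - 1 + 1 = m by omega]; rfl
    by_cases h3 : m = C.i
    · subst h3
      by_cases he : C.i % 2 = 0
      · refine ⟨C.spv C.i, ?_, Or.inl ⟨C.i, by omega, by omega, rfl⟩⟩
        rw [C.spv_i]; exact (C.c9 he).symm
      · refine ⟨C.v (C.i - 1), (C.c14 (C.i-1) (by omega) (by omega) (by omega) _ ?_).symm,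
          Or.inr ⟨C.i - 1, by omega, by omega, by omega, rfl⟩⟩
        right; rw [show C.i - 1 + 1 = C.i by omega]; rfl
    by_cases h4 : m = C.i + 1
    · subst h4
      by_cases he : C.i % 2 = 0
      · exact ⟨C.v (C.i + 1),
          (C.c15 (C.i+1) (by omega) (by omega) (by omega) _ (Or.inl rfl)).symm,
          Or.inr ⟨C.i + 1, by omega, by omega, by omega, rfl⟩⟩
      · refine ⟨C.spv (C.i + 1), ?_,
          Or.inl ⟨C.i + 1, by omega, by (have := hpe (by omega); omega), rfl⟩⟩
        rw [C.spv_i1]; exact (C.c12 (by omega)).symm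
    · have h5 : C.i + 2 ≤ m := by omega
      by_cases he : m % 2 = 1
      · exact ⟨C.v m, (C.c15 m (by omega) (by omega) he _ (Or.inl rfl)).symm,
          Or.inr ⟨m, by omega, by omega, by omega, rfl⟩⟩
      · refine ⟨C.v (m-1), (C.c15 (m-1) (by omega) (by omega) (by omega) _ ?_).symm,
          Or.inr ⟨m-1, by omega, by omega, by omega, rfl⟩⟩
        right; rw [show m - 1 + 1 = m by omega]; rfl
  | true =>
    by_cases h2 : m < C.i
    · by_cases he : m % 2 = 1
      · exact ⟨C.v m, (C.c13 m (by omega) h2 he _ (Or.inl rfl)).symm,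
          Or.inr ⟨m, by omega, by omega, by omega, rfl⟩⟩
      · refine ⟨C.v (m-1), (C.c13 (m-1) (by omega) (by omega) (by omega) _ ?_).symm,
          Or.inr ⟨m-1, by omega, by omega, by omega, rfl⟩⟩
        right; rw [show m - 1 + 1 = m by omega]; rfl
    by_cases h3 : m = C.i
    · subst h3
      by_cases he : C.i % 2 = 1
      · refine ⟨C.spv C.i, ?_, Or.inl ⟨C.i, by omega, by omega, rfl⟩⟩
        rw [C.spv_i]; exact (C.c11 he).symm
      · refine ⟨C.v (C.i - 1), (C.c13 (C.i-1) (by omega) (by omega) (by omega) _ ?_).symm,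
          Or.inr ⟨C.i - 1, by omega, by omega, by omega, rfl⟩⟩
        right; rw [show C.i - 1 + 1 = C.i by omega]; rfl
    by_cases h4 : m = C.i + 1
    · subst h4
      by_cases he : C.i % 2 = 0
      · refine ⟨C.spv (C.i + 1), ?_,
          Or.inl ⟨C.i + 1, by omega, by (have := hpe (by omega); omega), rfl⟩⟩
        rw [C.spv_i1]; exact (C.c10 he).symm
      · exact ⟨C.v (C.i + 1),
          (C.c16 (C.i+1) (by omega) (by omega) (by omega) _ (Or.inl rfl)).symm,
          Or.inr ⟨C.i + 1, by omega, by omega, by omega, rfl⟩⟩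
    · have h5 : C.i + 2 ≤ m := by omega
      by_cases he : m % 2 = 0
      · exact ⟨C.v m, (C.c16 m (by omega) (by omega) he _ (Or.inl rfl)).symm,
          Or.inr ⟨m, by omega, by omega, by omega, rfl⟩⟩
      · refine ⟨C.v (m-1), (C.c16 (m-1) (by omega) (by omega) (by omega) _ ?_).symm,
          Or.inr ⟨m-1, by omega, by omega, by omega, rfl⟩⟩
        right; rw [show m - 1 + 1 = m by omega]; rfl

lemma attach7 {cb : Bool} {m : ℕ} (hp : (cb, m) ∈ Xset C.n) (h7 : chi C.j (cb, m) = 7) :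
    ∃ w, C.T.G.Adj (C.T.leaf (cb, m)) w ∧ C.Int7 w := by
  have hm1 : 1 ≤ m := hp.1
  have hmn : m ≤ C.n := hp.2
  have hmj : C.j + 3 ≤ m := chi_char7 h7
  have hj2 := C.hj2; have hj' := C.hj'; have hn6 := C.hn6
  have hi2 := C.hi2; have hi' := C.hi'; have hij := C.hij
  have hnE : C.n % 2 = 0 := Nat.even_iff.mp C.hn
  obtain ⟨b1, b2, b3, b4, b5, b6, b7, b8⟩ := C.pbounds
  have hps : C.j + 3 ≤ C.i → C.pStart7 = C.j + 2 := by unfold pStart7; split_ifs <;> omega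
  have hspn : C.spv C.n = C.u (C.n - 1) := by
    have := C.spv_gt (k := C.n - 1) (by omega) le_rfl
    rwa [show C.n - 1 + 1 = C.n by omega] at this
  cases cb with
  | false =>
    by_cases h2 : m < C.i
    · by_cases he : m % 2 = 0
      · exact ⟨C.v m, (C.c14 m (by omega) h2 he _ (Or.inl rfl)).symm,
          Or.inr ⟨m, by omega, by omega, by omega, rfl⟩⟩
      · refine ⟨C.v (m-1), (C.c14 (m-1) (by omega) (by omega) (by omega) _ ?_).symm,
          Or.inr ⟨m-1, by omega, by omega, by omega, rfl⟩⟩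
        right; rw [show m - 1 + 1 = m by omega]; rfl
    by_cases h3 : m = C.i
    · subst h3
      by_cases he : C.i % 2 = 0
      · refine ⟨C.spv C.i, ?_, Or.inl ⟨C.i, by (have := hps (by omega); omega), by omega, rfl⟩⟩
        rw [C.spv_i]; exact (C.c9 he).symm
      · refine ⟨C.v (C.i - 1), (C.c14 (C.i-1) (by omega) (by omega) (by omega) _ ?_).symm,
          Or.inr ⟨C.i - 1, by omega, by omega, by omega, rfl⟩⟩
        right; rw [show C.i - 1 + 1 = C.i by omega]; rfl
    by_cases h4 : m = C.i + 1
    · subst h4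
      by_cases he : C.i % 2 = 0
      · exact ⟨C.v (C.i + 1),
          (C.c15 (C.i+1) (by omega) (by omega) (by omega) _ (Or.inl rfl)).symm,
          Or.inr ⟨C.i + 1, by omega, by omega, by omega, rfl⟩⟩
      · refine ⟨C.spv (C.i + 1), ?_, Or.inl ⟨C.i + 1, by omega, by omega, rfl⟩⟩
        rw [C.spv_i1]; exact (C.c12 (by omega)).symm
    · have h5 : C.i + 2 ≤ m := by omega
      by_cases he : m % 2 = 1
      · exact ⟨C.v m, (C.c15 m (by omega) (by omega) he _ (Or.inl rfl)).symm,
          Or.inr ⟨m, by omega, by omega, by omega, rfl⟩⟩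
      · refine ⟨C.v (m-1), (C.c15 (m-1) (by omega) (by omega) (by omega) _ ?_).symm,
          Or.inr ⟨m-1, by omega, by omega, by omega, rfl⟩⟩
        right; rw [show m - 1 + 1 = m by omega]; rfl
  | true =>
    by_cases hmtop : m = C.n
    · subst hmtop
      refine ⟨C.spv C.n, ?_, Or.inl ⟨C.n, by omega, le_rfl, rfl⟩⟩
      rw [hspn]; exact C.c7.symm
    by_cases h2 : m < C.i
    · by_cases he : m % 2 = 1
      · exact ⟨C.v m, (C.c13 m (by omega) h2 he _ (Or.inl rfl)).symm,
          Or.inr ⟨m, by omega, by omega, by omega, rfl⟩⟩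
      · refine ⟨C.v (m-1), (C.c13 (m-1) (by omega) (by omega) (by omega) _ ?_).symm,
          Or.inr ⟨m-1, by omega, by omega, by omega, rfl⟩⟩
        right; rw [show m - 1 + 1 = m by omega]; rfl
    by_cases h3 : m = C.i
    · subst h3
      by_cases he : C.i % 2 = 1
      · refine ⟨C.spv C.i, ?_, Or.inl ⟨C.i, by (have := hps (by omega); omega), by omega, rfl⟩⟩
        rw [C.spv_i]; exact (C.c11 he).symm
      · refine ⟨C.v (C.i - 1), (C.c13 (C.i-1) (by omega) (by omega) (by omega) _ ?_).symm,
          Or.inr ⟨C.i - 1, by omega, by omega, by omega, rfl⟩⟩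
        right; rw [show C.i - 1 + 1 = C.i by omega]; rfl
    by_cases h4 : m = C.i + 1
    · subst h4
      by_cases he : C.i % 2 = 0
      · refine ⟨C.spv (C.i + 1), ?_, Or.inl ⟨C.i + 1, by omega, by omega, rfl⟩⟩
        rw [C.spv_i1]; exact (C.c10 he).symm
      · exact ⟨C.v (C.i + 1),
          (C.c16 (C.i+1) (by omega) (by omega) (by omega) _ (Or.inl rfl)).symm,
          Or.inr ⟨C.i + 1, by omega, by omega, by omega, rfl⟩⟩
    · have h5 : C.i + 2 ≤ m := by omega
      by_cases he : m % 2 = 0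
      · exact ⟨C.v m, (C.c16 m (by omega) (by omega) he _ (Or.inl rfl)).symm,
          Or.inr ⟨m, by omega, by omega, by omega, rfl⟩⟩
      · refine ⟨C.v (m-1), (C.c16 (m-1) (by omega) (by omega) (by omega) _ ?_).symm,
          Or.inr ⟨m-1, by omega, by omega, by omega, rfl⟩⟩
        right; rw [show m - 1 + 1 = m by omega]; rfl

lemma nach_cases (h : ¬ C.ach) : (C.j < C.i ∧ C.j % 2 = 1) ∨ (C.i < C.j ∧ C.j % 2 = 0) := by
  have hij := C.hij
  have hm := Nat.mod_two_eq_zero_or_one C.j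
  rcases Nat.lt_trichotomy C.i C.j with h1 | h1 | h1
  · rcases hm with h2 | h2
    · exact Or.inr ⟨h1, h2⟩
    · exact absurd (Or.inr ⟨h1, h2⟩) h
  · exact absurd h1 hij
  · rcases hm with h2 | h2
    · exact absurd (Or.inl ⟨h1, h2⟩) h
    · exact Or.inl ⟨h1, h2⟩

lemma cherry_adj_a (h : C.ach) :
    C.T.G.Adj (C.T.leaf (a C.j)) (C.v C.j) ∧ C.T.G.Adj (C.T.leaf (a (C.j+1))) (C.v C.j) := by
  have hj2 := C.hj2; have hj' := C.hj'; have hn6 := C.hn6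
  rcases h with ⟨h1, h2⟩ | ⟨h1, h2⟩
  · exact ⟨(C.c14 C.j (by omega) h1 h2 _ (Or.inl rfl)).symm,
      (C.c14 C.j (by omega) h1 h2 _ (Or.inr rfl)).symm⟩
  · exact ⟨(C.c15 C.j h1 (by omega) h2 _ (Or.inl rfl)).symm,
      (C.c15 C.j h1 (by omega) h2 _ (Or.inr rfl)).symm⟩

lemma cherry_adj_b (h : ¬ C.ach) :
    C.T.G.Adj (C.T.leaf (b C.j)) (C.v C.j) ∧ C.T.G.Adj (C.T.leaf (b (C.j+1))) (C.v C.j) := by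
  have hj2 := C.hj2; have hj' := C.hj'; have hn6 := C.hn6
  rcases C.nach_cases h with ⟨h1, h2⟩ | ⟨h1, h2⟩
  · exact ⟨(C.c13 C.j (by omega) h1 h2 _ (Or.inl rfl)).symm,
      (C.c13 C.j (by omega) h1 h2 _ (Or.inr rfl)).symm⟩
  · exact ⟨(C.c16 C.j h1 (by omega) h2 _ (Or.inl rfl)).symm,
      (C.c16 C.j h1 (by omega) h2 _ (Or.inr rfl)).symm⟩

lemma spine_attach_a (h : ¬ C.ach) :
    (∃ w, C.T.G.Adj (C.T.leaf (a C.j)) w ∧ C.IntSp w) ∧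
    (∃ w, C.T.G.Adj (C.T.leaf (a (C.j+1))) w ∧ C.IntSp w) := by
  have hj2 := C.hj2; have hj' := C.hj'; have hn6 := C.hn6
  have hi2 := C.hi2; have hi' := C.hi'; have hij := C.hij
  have hL1 : C.i < C.j → C.Lsp = C.j := by unfold Lsp; split_ifs <;> omega
  have hL2 : C.j < C.i → C.Lsp = C.j - 1 := by unfold Lsp; split_ifs <;> omega
  rcases C.nach_cases h with ⟨h1, h2⟩ | ⟨h1, h2⟩
  · constructor
    · refine ⟨C.v (C.j - 1), (C.c14 (C.j-1) (by omega) (by omega) (by omega) _ ?_).symm,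
        Or.inr (Or.inl ⟨by omega, rfl⟩)⟩
      right; rw [show C.j - 1 + 1 = C.j by omega]
    · by_cases hji : C.j + 1 = C.i
      · refine ⟨C.spv (C.j+1), ?_,
          Or.inl ⟨C.j+1, by (have := hL2 h1; omega), by (have := hL2 h1; omega), rfl⟩⟩
        rw [hji, C.spv_i]
        exact (C.c9 (by omega)).symm
      · refine ⟨C.v (C.j+1),
          (C.c14 (C.j+1) (by omega) (by omega) (by omega) _ (Or.inl rfl)).symm,
          Or.inr (Or.inr ⟨by omega, rfl⟩)⟩
  · constructor
    · by_cases hji : C.j = C.i + 1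
      · refine ⟨C.spv C.j, ?_,
          Or.inl ⟨C.j, by (have := hL1 h1; omega), by (have := hL1 h1; omega), rfl⟩⟩
        rw [hji, C.spv_i1]
        exact (C.c12 (by omega)).symm
      · refine ⟨C.v (C.j-1), (C.c15 (C.j-1) (by omega) (by omega) (by omega) _ ?_).symm,
          Or.inr (Or.inl ⟨by omega, rfl⟩)⟩
        right; rw [show C.j - 1 + 1 = C.j by omega]
    · exact ⟨C.v (C.j+1),
        (C.c15 (C.j+1) (by omega) (by omega) (by omega) _ (Or.inl rfl)).symm,
        Or.inr (Or.inr ⟨by omega, rfl⟩)⟩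

lemma spine_attach_b (h : C.ach) :
    (∃ w, C.T.G.Adj (C.T.leaf (b C.j)) w ∧ C.IntSp w) ∧
    (∃ w, C.T.G.Adj (C.T.leaf (b (C.j+1))) w ∧ C.IntSp w) := by
  have hj2 := C.hj2; have hj' := C.hj'; have hn6 := C.hn6
  have hi2 := C.hi2; have hi' := C.hi'; have hij := C.hij
  have hL1 : C.i < C.j → C.Lsp = C.j := by unfold Lsp; split_ifs <;> omega
  have hL2 : C.j < C.i → C.Lsp = C.j - 1 := by unfold Lsp; split_ifs <;> omega
  rcases h with ⟨h1, h2⟩ | ⟨h1, h2⟩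
  · constructor
    · refine ⟨C.v (C.j - 1), (C.c13 (C.j-1) (by omega) (by omega) (by omega) _ ?_).symm,
        Or.inr (Or.inl ⟨by omega, rfl⟩)⟩
      right; rw [show C.j - 1 + 1 = C.j by omega]
    · by_cases hji : C.j + 1 = C.i
      · refine ⟨C.spv (C.j+1), ?_,
          Or.inl ⟨C.j+1, by (have := hL2 h1; omega), by (have := hL2 h1; omega), rfl⟩⟩
        rw [hji, C.spv_i]
        exact (C.c11 (by omega)).symm
      · refine ⟨C.v (C.j+1),
          (C.c13 (C.j+1) (by omega) (by omega) (by omega) _ (Or.inl rfl)).symm,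
          Or.inr (Or.inr ⟨by omega, rfl⟩)⟩
  · constructor
    · by_cases hji : C.j = C.i + 1
      · refine ⟨C.spv C.j, ?_,
          Or.inl ⟨C.j, by (have := hL1 h1; omega), by (have := hL1 h1; omega), rfl⟩⟩
        rw [hji, C.spv_i1]
        exact (C.c10 (by omega)).symm
      · refine ⟨C.v (C.j-1), (C.c16 (C.j-1) (by omega) (by omega) (by omega) _ ?_).symm,
          Or.inr (Or.inl ⟨by omega, rfl⟩)⟩
        right; rw [show C.j - 1 + 1 = C.j by omega]
    · exact ⟨C.v (C.j+1),
        (C.c16 (C.j+1) (by omega) (by omega) (by omega) _ (Or.inl rfl)).symm,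
        Or.inr (Or.inr ⟨by omega, rfl⟩)⟩

end Ctx


namespace Ctx

variable (C : Ctx)

lemma intPart0 {w : C.T.V} : C.IntPart 0 w ↔ C.Int0 w := by
  unfold IntPart; norm_num

lemma intPart3 {w : C.T.V} :
    C.IntPart 3 w ↔ (if C.ach then C.IntCh w else C.IntSp w) := by
  unfold IntPart; norm_num

lemma intPart4 {w : C.T.V} :
    C.IntPart 4 w ↔ (if C.ach then C.IntSp w else C.IntCh w) := by
  unfold IntPart; norm_num

lemma intPart7 {w : C.T.V} : C.IntPart 7 w ↔ C.Int7 w := by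
  unfold IntPart; norm_num

lemma conn_singleton {s : ℕ} (q : Lbl) (hs : ∀ w : C.T.V, ¬ C.IntPart s w)
    (hchar : ∀ p : Lbl, chi C.j p = s → p = q) :
    ∀ x ∈ C.W s, ∀ y ∈ C.W s, Reach C.T.G (C.W s) x y := by
  intro x hx y hy
  have hch : ∀ z ∈ C.W s, z = C.T.leaf q := by
    intro z hz
    rcases hz with ⟨p, hp, hc, rfl⟩ | hint
    · rw [hchar p hc]
    · exact absurd hint (hs z)
  have hxy : x = y := (hch x hx).trans (hch y hy).symm
  exact hxy ▸ Reach.refl hx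

lemma connW : ∀ s : ℕ, ∀ x ∈ C.W s, ∀ y ∈ C.W s, Reach C.T.G (C.W s) x y := by
  have hj2 := C.hj2
  intro s
  match s with
  | 0 =>
    have hsub : ∀ w, C.Int0 w → w ∈ C.W 0 := fun w hw => Or.inr ((C.intPart0).mpr hw)
    have key : ∀ x ∈ C.W 0, Reach C.T.G (C.W 0) x (C.spv 1) := by
      intro x hx
      rcases hx with ⟨⟨cb, m⟩, hp, hc, rfl⟩ | hint
      · obtain ⟨w, hadj, hw⟩ := C.attach0 hp hc
        exact (Reach.step hadj (Or.inl ⟨_, hp, hc, rfl⟩) (hsub w hw)).trans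
          (C.reach_Int0 _ hsub w hw)
      · exact C.reach_Int0 _ hsub x ((C.intPart0).mp hint)
    exact fun x hx y hy => (key x hx).trans (key y hy).symm
  | 1 =>
    refine C.conn_singleton (a (C.j - 1)) (fun w hw => by unfold IntPart at hw; norm_num at hw)
      (fun p hc => ?_)
    obtain ⟨cb, m⟩ := p
    obtain ⟨hc1, hc2⟩ := chi_char1 hc
    subst hc1
    have : m = C.j - 1 := by omega
    rw [this]; rfl
  | 2 =>
    refine C.conn_singleton (b (C.j - 1)) (fun w hw => by unfold IntPart at hw; norm_num at hw)
      (fun p hc => ?_)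
    obtain ⟨cb, m⟩ := p
    obtain ⟨hc1, hc2⟩ := chi_char2 hc
    subst hc1
    have : m = C.j - 1 := by omega
    rw [this]; rfl
  | 5 =>
    refine C.conn_singleton (a (C.j + 2)) (fun w hw => by unfold IntPart at hw; norm_num at hw)
      (fun p hc => ?_)
    obtain ⟨cb, m⟩ := p
    obtain ⟨hc1, hc2⟩ := chi_char5 hc
    subst hc1
    rw [hc2]; rfl
  | 6 =>
    refine C.conn_singleton (b (C.j + 2)) (fun w hw => by unfold IntPart at hw; norm_num at hw)
      (fun p hc => ?_)
    obtain ⟨cb, m⟩ := p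
    obtain ⟨hc1, hc2⟩ := chi_char6 hc
    subst hc1
    rw [hc2]; rfl
  | 3 =>
    by_cases hach : C.ach
    · have hsub : ∀ w, C.IntCh w → w ∈ C.W 3 :=
        fun w hw => Or.inr ((C.intPart3).mpr (by rw [if_pos hach]; exact hw))
      have hvj : C.v C.j ∈ C.W 3 := hsub _ rfl
      have key : ∀ x ∈ C.W 3, Reach C.T.G (C.W 3) x (C.v C.j) := by
        intro x hx
        rcases hx with ⟨⟨cb, m⟩, hp, hc, rfl⟩ | hint
        · obtain ⟨hc1, hc2⟩ := chi_char3 hc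
          subst hc1
          have hca := C.cherry_adj_a hach
          rcases hc2 with rfl | rfl
          · exact Reach.step hca.1 (Or.inl ⟨_, hp, hc, rfl⟩) hvj
          · exact Reach.step hca.2 (Or.inl ⟨_, hp, hc, rfl⟩) hvj
        · have hw := (C.intPart3).mp hint
          rw [if_pos hach] at hw
          subst hw
          exact Reach.refl hvj
      exact fun x hx y hy => (key x hx).trans (key y hy).symm
    · have hsub : ∀ w, C.IntSp w → w ∈ C.W 3 :=
        fun w hw => Or.inr ((C.intPart3).mpr (by rw [if_neg hach]; exact hw))
      have key : ∀ x ∈ C.W 3, Reach C.T.G (C.W 3) x (C.spv C.Lsp) := by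
        intro x hx
        rcases hx with ⟨⟨cb, m⟩, hp, hc, rfl⟩ | hint
        · obtain ⟨hc1, hc2⟩ := chi_char3 hc
          subst hc1
          obtain ⟨ha1, ha2⟩ := C.spine_attach_a hach
          rcases hc2 with rfl | rfl
          · obtain ⟨w, hadj, hw⟩ := ha1
            exact (Reach.step hadj (Or.inl ⟨_, hp, hc, rfl⟩) (hsub w hw)).trans
              (C.reach_IntSp _ hsub w hw)
          · obtain ⟨w, hadj, hw⟩ := ha2
            exact (Reach.step hadj (Or.inl ⟨_, hp, hc, rfl⟩) (hsub w hw)).trans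
              (C.reach_IntSp _ hsub w hw)
        · have hw := (C.intPart3).mp hint
          rw [if_neg hach] at hw
          exact C.reach_IntSp _ hsub x hw
      exact fun x hx y hy => (key x hx).trans (key y hy).symm
  | 4 =>
    by_cases hach : C.ach
    · have hsub : ∀ w, C.IntSp w → w ∈ C.W 4 :=
        fun w hw => Or.inr ((C.intPart4).mpr (by rw [if_pos hach]; exact hw))
      have key : ∀ x ∈ C.W 4, Reach C.T.G (C.W 4) x (C.spv C.Lsp) := by
        intro x hx
        rcases hx with ⟨⟨cb, m⟩, hp, hc, rfl⟩ | hint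
        · obtain ⟨hc1, hc2⟩ := chi_char4 hc
          subst hc1
          obtain ⟨ha1, ha2⟩ := C.spine_attach_b hach
          rcases hc2 with rfl | rfl
          · obtain ⟨w, hadj, hw⟩ := ha1
            exact (Reach.step hadj (Or.inl ⟨_, hp, hc, rfl⟩) (hsub w hw)).trans
              (C.reach_IntSp _ hsub w hw)
          · obtain ⟨w, hadj, hw⟩ := ha2
            exact (Reach.step hadj (Or.inl ⟨_, hp, hc, rfl⟩) (hsub w hw)).trans
              (C.reach_IntSp _ hsub w hw)
        · have hw := (C.intPart4).mp hint
          rw [if_pos hach] at hw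
          exact C.reach_IntSp _ hsub x hw
      exact fun x hx y hy => (key x hx).trans (key y hy).symm
    · have hsub : ∀ w, C.IntCh w → w ∈ C.W 4 :=
        fun w hw => Or.inr ((C.intPart4).mpr (by rw [if_neg hach]; exact hw))
      have hvj : C.v C.j ∈ C.W 4 := hsub _ rfl
      have key : ∀ x ∈ C.W 4, Reach C.T.G (C.W 4) x (C.v C.j) := by
        intro x hx
        rcases hx with ⟨⟨cb, m⟩, hp, hc, rfl⟩ | hint
        · obtain ⟨hc1, hc2⟩ := chi_char4 hc
          subst hc1
          have hcb := C.cherry_adj_b hach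
          rcases hc2 with rfl | rfl
          · exact Reach.step hcb.1 (Or.inl ⟨_, hp, hc, rfl⟩) hvj
          · exact Reach.step hcb.2 (Or.inl ⟨_, hp, hc, rfl⟩) hvj
        · have hw := (C.intPart4).mp hint
          rw [if_neg hach] at hw
          subst hw
          exact Reach.refl hvj
      exact fun x hx y hy => (key x hx).trans (key y hy).symm
  | 7 =>
    have hsub : ∀ w, C.Int7 w → w ∈ C.W 7 := fun w hw => Or.inr ((C.intPart7).mpr hw)
    have key : ∀ x ∈ C.W 7, Reach C.T.G (C.W 7) x (C.spv C.n) := by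
      intro x hx
      rcases hx with ⟨⟨cb, m⟩, hp, hc, rfl⟩ | hint
      · obtain ⟨w, hadj, hw⟩ := C.attach7 hp hc
        exact (Reach.step hadj (Or.inl ⟨_, hp, hc, rfl⟩) (hsub w hw)).trans
          (C.reach_Int7 _ hsub w hw)
      · exact C.reach_Int7 _ hsub x ((C.intPart7).mp hint)
    exact fun x hx y hy => (key x hx).trans (key y hy).symm
  | (s + 8) =>
    intro x hx
    exfalso
    rcases hx with ⟨p, hp, hc, rfl⟩ | hint
    · have := chi_lt8 C.j p; omega
    · have : C.IntPart (s + 8) x ↔ False := by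
        unfold IntPart
        rw [if_neg (by omega), if_neg (by omega), if_neg (by omega), if_neg (by omega)]
      exact (this.mp hint)

end Ctx

theorem lobsterMid_displays_chi (n i j : ℕ) (hn : Even n) (hn6 : 6 ≤ n)
    (hi : 2 ≤ i) (hi' : i ≤ n - 2) (hj : 2 ≤ j) (hj' : j ≤ n - 2) (hij : i ≠ j)
    (T : PhyloTree (Xset n)) (u v : ℕ → T.V) (uA uB : T.V)
    (h : IsLobsterMid n i T u v uA uB) :
    displays T (chi j) := by
  let C : Ctx := ⟨n, i, j, hn, hn6, hi, hi', hj, hj', hij, T, u, v, uA, uB, h⟩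
  exact displays_of_parts T (chi j) C.W C.W_disj C.connW (fun p hp => Or.inl ⟨p, hp, rfl, rfl⟩)

end PP
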